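/- Suppose Z_n = π*(A_n) in distribution for each n, where π* is a unit-rate Poisson process independent of nonnegative random variables A_n, and suppose Z_n converges in distribution to a proper nondegenerate random variable Z. Then A_n converges in distribution to some random variable A ≥ 0 and Z has a mixed Poisson law with mixing distribution the law of A, i.e., P{Z = m} = E[e^{−A} A^m/m!] for all m ∈ ℕ_0. -/

import Mathlib

open MeasureTheory ProbabilityTheory Real Set Filter
open scoped ENNReal Topology NNReal

noncomputable section
namespace MixedPoissonAux

/-- The clamped Poisson-type density `e^{-t·(a⊔0)} (a⊔0)^k / k!`. -/
def g (t : ℝ) (k : ℕ) (a : ℝ) : ℝ :=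
  Real.exp (-(t * max a 0)) * (max a 0) ^ k / (Nat.factorial k)

lemma g_cont (t : ℝ) (k : ℕ) : Continuous (g t k) := by
  unfold g
  fun_prop

lemma g_nonneg (t : ℝ) (k : ℕ) (a : ℝ) : 0 ≤ g t k a := by
  unfold g
  positivity

lemma tendsto_exp_partial (x : ℝ) :
    Tendsto (fun J => ∑ j ∈ Finset.range J, x ^ j / (Nat.factorial j)) atTop (𝓝 (Real.exp x)) := by
  have hs : Summable (fun j : ℕ => x ^ j / (Nat.factorial j)) :=
    NormedSpace.expSeries_div_summable x
  have := hs.hasSum.tendsto_sum_nat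
  rwa [show (∑' j : ℕ, x ^ j / (Nat.factorial j)) = Real.exp x by
    rw [Real.exp_eq_exp_ℝ, NormedSpace.exp_eq_tsum_div]] at this

lemma pow_div_factorial_le (b δ : ℝ) (hb : 0 ≤ b) (hδ : 0 < δ) (k : ℕ) :
    b ^ k / (Nat.factorial k) ≤ (2 / δ) ^ k * Real.exp (δ / 2 * b) := by
  have h := Real.pow_div_factorial_le_exp (x := δ / 2 * b) (by positivity) k
  have h2 : (δ / 2 * b) ^ k / (Nat.factorial k) ≤ Real.exp (δ / 2 * b) := h
  have h3 : b ^ k / (Nat.factorial k)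
      = (2 / δ) ^ k * ((δ / 2 * b) ^ k / (Nat.factorial k)) := by
    rw [mul_pow, ← mul_div_assoc, ← mul_assoc, ← mul_pow]
    rw [show 2 / δ * (δ / 2) = 1 by field_simp]
    simp
  rw [h3]
  exact mul_le_mul_of_nonneg_left h2 (by positivity)

/-- Master bound : for `0 < δ ≤ t`, `g t k a ≤ (2/δ)^k · e^{-(δ/2)(a⊔0)} ≤ (2/δ)^k`. -/
lemma g_le (t δ : ℝ) (hδ : 0 < δ) (hδt : δ ≤ t) (k : ℕ) (a : ℝ) :
    g t k a ≤ (2 / δ) ^ k * Real.exp (-(δ / 2 * max a 0)) := by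
  set b := max a 0 with hb
  have hb0 : 0 ≤ b := le_max_right _ _
  have h1 : g t k a = b ^ k / (Nat.factorial k) * Real.exp (-(t * b)) := by
    unfold g; ring
  rw [h1]
  have h2 : b ^ k / (Nat.factorial k) ≤ (2 / δ) ^ k * Real.exp (δ / 2 * b) :=
    pow_div_factorial_le b δ hb0 hδ k
  have h3 : Real.exp (-(t * b)) ≤ Real.exp (-(δ * b)) := by
    apply Real.exp_le_exp.2; nlinarith
  calc b ^ k / (Nat.factorial k) * Real.exp (-(t * b))
      ≤ (2 / δ) ^ k * Real.exp (δ / 2 * b) * Real.exp (-(δ * b)) := by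
        apply mul_le_mul h2 h3 (Real.exp_pos _).le (by positivity)
    _ = (2 / δ) ^ k * Real.exp (-(δ / 2 * b)) := by
        rw [mul_assoc, ← Real.exp_add]; ring_nf

lemma g_le' (t δ : ℝ) (hδ : 0 < δ) (hδt : δ ≤ t) (k : ℕ) (a : ℝ) :
    g t k a ≤ (2 / δ) ^ k := by
  refine (g_le t δ hδ hδt k a).trans ?_
  have : Real.exp (-(δ / 2 * max a 0)) ≤ 1 := by
    rw [Real.exp_le_one_iff]
    have : (0:ℝ) ≤ max a 0 := le_max_right _ _
    nlinarith
  nlinarith [pow_pos (div_pos two_pos hδ) k]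

lemma integrable_of_bounded {ν : Measure ℝ} [IsFiniteMeasure ν] {f : ℝ → ℝ} (hf : Continuous f)
    (C : ℝ) (hC : ∀ x, |f x| ≤ C) : Integrable f ν := by
  refine (integrable_const C).mono' hf.aestronglyMeasurable ?_
  exact Eventually.of_forall fun x => by simpa using hC x

lemma g_integrable {ν : Measure ℝ} [IsFiniteMeasure ν] {t : ℝ} (ht : 0 < t) (k : ℕ) :
    Integrable (g t k) ν :=
  integrable_of_bounded (g_cont t k) ((2 / t) ^ k)
    (fun a => abs_le.2 ⟨by linarith [g_nonneg t k a, pow_pos (div_pos two_pos ht) k],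
      g_le' t t ht le_rfl k a⟩)


lemma choose_cast_eq (j k : ℕ) :
    ((j + k).choose k : ℝ) = (Nat.factorial (j + k) : ℝ) / (Nat.factorial j * Nat.factorial k) := by
  have h := Nat.choose_mul_factorial_mul_factorial (Nat.le_add_left k j)
  have h2 : (j + k).choose k * Nat.factorial k * Nat.factorial j = Nat.factorial (j + k) := by
    simpa [Nat.add_sub_cancel] using h
  field_simp
  push_cast [← h2]
  ring

lemma key_eq (t c : ℝ) (k : ℕ) (a : ℝ) (J : ℕ) :
    ∑ j ∈ Finset.range J, c ^ j * ((j + k).choose k : ℝ) * g t (j + k) a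
      = (Real.exp (-(t * max a 0)) * (max a 0) ^ k / (Nat.factorial k)) *
        ∑ j ∈ Finset.range J, (c * max a 0) ^ j / (Nat.factorial j) := by
  rw [Finset.mul_sum]
  refine Finset.sum_congr rfl fun j _ => ?_
  unfold g
  rw [choose_cast_eq, pow_add, mul_pow]
  have h1 : (Nat.factorial j : ℝ) ≠ 0 := Nat.cast_ne_zero.2 (Nat.factorial_ne_zero j)
  have h2 : (Nat.factorial k : ℝ) ≠ 0 := Nat.cast_ne_zero.2 (Nat.factorial_ne_zero k)
  have h3 : (Nat.factorial (j + k) : ℝ) ≠ 0 := Nat.cast_ne_zero.2 (Nat.factorial_ne_zero _)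
  field_simp

/-- Key series representation: the integral of `g t' k` is the limit of the partial sums
of the series with coefficients given by integrals of `g t (j+k)`, provided `|t'-t| < t`. -/
lemma sum_repr (ν : Measure ℝ) [IsProbabilityMeasure ν] (k : ℕ) {t t' : ℝ} (ht : 0 < t)
    (hd : |t' - t| < t) :
    Tendsto (fun J => ∑ j ∈ Finset.range J,
        (t - t') ^ j * ((j + k).choose k : ℝ) * ∫ a, g t (j + k) a ∂ν)
      atTop (𝓝 (∫ a, g t' k a ∂ν)) := by
  set δ := t - |t' - t| with hδdef
  have hδ : 0 < δ := by rw [hδdef]; linarith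
  have hδt : δ ≤ t := by rw [hδdef]; linarith [abs_nonneg (t' - t)]
  set F : ℕ → ℝ → ℝ := fun J a => ∑ j ∈ Finset.range J,
      (t - t') ^ j * ((j + k).choose k : ℝ) * g t (j + k) a with hF
  have hFint : ∀ J, ∫ a, F J a ∂ν = ∑ j ∈ Finset.range J,
      (t - t') ^ j * ((j + k).choose k : ℝ) * ∫ a, g t (j + k) a ∂ν := by
    intro J
    rw [integral_finset_sum]
    · exact Finset.sum_congr rfl fun j _ => integral_const_mul _ _
    · exact fun j _ => (g_integrable ht (j + k)).const_mul _
  have hbound : ∀ J a, |F J a| ≤ (2 / δ) ^ k := by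
    intro J a
    set b := max a 0 with hb
    have hb0 : (0:ℝ) ≤ b := le_max_right _ _
    have habs : |F J a| ≤ ∑ j ∈ Finset.range J,
        |t' - t| ^ j * ((j + k).choose k : ℝ) * g t (j + k) a := by
      refine (Finset.abs_sum_le_sum_abs _ _).trans ?_
      refine Finset.sum_le_sum fun j _ => ?_
      rw [abs_mul, abs_mul, abs_pow, Nat.abs_cast, abs_of_nonneg (g_nonneg _ _ _),
        abs_sub_comm]
    have hsum : ∑ j ∈ Finset.range J, |t' - t| ^ j * ((j + k).choose k : ℝ) * g t (j + k) a
        = (Real.exp (-(t * b)) * b ^ k / (Nat.factorial k)) *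
          ∑ j ∈ Finset.range J, (|t' - t| * b) ^ j / (Nat.factorial j) := key_eq t _ k a J
    have hexp : ∑ j ∈ Finset.range J, (|t' - t| * b) ^ j / (Nat.factorial j)
        ≤ Real.exp (|t' - t| * b) :=
      Real.sum_le_exp_of_nonneg (by positivity) J
    have : ∑ j ∈ Finset.range J, |t' - t| ^ j * ((j + k).choose k : ℝ) * g t (j + k) a
        ≤ g δ k a := by
      rw [hsum]
      unfold g
      rw [← hb]
      calc Real.exp (-(t * b)) * b ^ k / (Nat.factorial k) *
            ∑ j ∈ Finset.range J, (|t' - t| * b) ^ j / (Nat.factorial j)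
          ≤ Real.exp (-(t * b)) * b ^ k / (Nat.factorial k) * Real.exp (|t' - t| * b) := by
            apply mul_le_mul_of_nonneg_left hexp (by positivity)
        _ = Real.exp (-(δ * b)) * b ^ k / (Nat.factorial k) := by
            rw [div_mul_eq_mul_div, mul_right_comm, ← Real.exp_add]
            congr 3
            rw [hδdef]; ring
    exact habs.trans (this.trans (g_le' δ δ hδ le_rfl k a))
  have hlim : ∀ a, Tendsto (fun J => F J a) atTop (𝓝 (g t' k a)) := by
    intro a
    set b := max a 0 with hb
    have h1 : ∀ J, F J a = (Real.exp (-(t * b)) * b ^ k / (Nat.factorial k)) *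
        ∑ j ∈ Finset.range J, ((t - t') * b) ^ j / (Nat.factorial j) := fun J => key_eq t _ k a J
    have h2 : Tendsto (fun J => (Real.exp (-(t * b)) * b ^ k / (Nat.factorial k)) *
        ∑ j ∈ Finset.range J, ((t - t') * b) ^ j / (Nat.factorial j)) atTop
        (𝓝 ((Real.exp (-(t * b)) * b ^ k / (Nat.factorial k)) * Real.exp ((t - t') * b))) :=
      (tendsto_exp_partial _).const_mul _
    have h3 : (Real.exp (-(t * b)) * b ^ k / (Nat.factorial k)) * Real.exp ((t - t') * b)
        = g t' k a := by
      unfold g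
      rw [← hb, div_mul_eq_mul_div, mul_right_comm, ← Real.exp_add]
      congr 3
      ring
    rw [← h3]
    simpa only [← h1] using h2
  have := tendsto_integral_of_dominated_convergence (μ := ν) (f := g t' k) (F := F) (fun _ => (2 / δ) ^ k)
    (fun J => by
      apply Continuous.aestronglyMeasurable
      unfold F
      exact continuous_finset_sum _ fun j _ => (continuous_const.mul (g_cont t (j + k))))
    (integrable_const _)
    (fun J => Eventually.of_forall fun a => by
      simpa [Real.norm_eq_abs] using hbound J a)
    (Eventually.of_forall hlim)
  have heq : (fun J => ∫ a, F J a ∂ν)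
      = fun J => ∑ j ∈ Finset.range J,
        (t - t') ^ j * ((j + k).choose k : ℝ) * ∫ a, g t (j + k) a ∂ν := funext hFint
  rwa [heq] at this


variable {ν ν' : Measure ℝ} [IsProbabilityMeasure ν] [IsProbabilityMeasure ν']

lemma good_step (hGood : ∀ k, ∫ a, g t k a ∂ν = ∫ a, g t k a ∂ν') (ht : 0 < t)
    {t' : ℝ} (h1 : 0 < t') (h2 : t' < 2 * t) (k : ℕ) :
    ∫ a, g t' k a ∂ν = ∫ a, g t' k a ∂ν' := by
  have hd : |t' - t| < t := abs_sub_lt_iff.2 ⟨by linarith, by linarith⟩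
  have H1 := sum_repr ν k ht hd
  have H2 := sum_repr ν' k ht hd
  simp only [hGood] at H1
  exact tendsto_nhds_unique H1 H2

lemma good_all (h : ∀ m, ∫ a, g 1 m a ∂ν = ∫ a, g 1 m a ∂ν') :
    ∀ t : ℝ, 0 < t → ∀ k, ∫ a, g t k a ∂ν = ∫ a, g t k a ∂ν' := by
  have key : ∀ n : ℕ, ∀ k, ∫ a, g ((3/2:ℝ)^n) k a ∂ν = ∫ a, g ((3/2:ℝ)^n) k a ∂ν' := by
    intro n
    induction n with
    | zero => simpa using h
    | succ n ih =>
        intro k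
        have hpos : (0:ℝ) < (3/2:ℝ)^n := by positivity
        refine good_step ih hpos (by positivity) ?_ k
        rw [pow_succ]
        nlinarith
  intro t ht k
  obtain ⟨n, hn⟩ := pow_unbounded_of_one_lt (R := ℝ) (t / 2) (by norm_num : (1:ℝ) < 3/2)
  exact good_step (key n) (by positivity) ht (by linarith) k

/-- The clamped map `a ↦ e^{-(a ⊔ 0)}`. -/
def T (a : ℝ) : ℝ := Real.exp (-(max a 0))

lemma T_cont : Continuous T := by unfold T; fun_prop

lemma T_mem (a : ℝ) : T a ∈ Icc (0:ℝ) 1 := by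
  constructor
  · exact (Real.exp_pos _).le
  · rw [T, Real.exp_le_one_iff]
    simp

lemma measure_eq_of_g_eq (h0 : ν (Iio 0) = 0) (h0' : ν' (Iio 0) = 0)
    (h : ∀ m, ∫ a, g 1 m a ∂ν = ∫ a, g 1 m a ∂ν') : ν = ν' := by
  have hTpow : ∀ (ρ : Measure ℝ) (j : ℕ), ∀ a : ℝ, (T a) ^ j = Real.exp (-((j:ℝ) * max a 0)) := by
    intro ρ j a
    rw [T, ← Real.exp_nat_mul]
    ring_nf
  have hmom : ∀ j : ℕ, ∫ a, (T a) ^ j ∂ν = ∫ a, (T a) ^ j ∂ν' := by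
    intro j
    rcases Nat.eq_zero_or_pos j with hj | hj
    · subst hj; simp
    · have hgj := good_all h (j : ℝ) (by exact_mod_cast hj) 0
      have hg0 : ∀ a, g (j:ℝ) 0 a = (T a) ^ j := by
        intro a
        rw [hTpow ν j a, g]
        simp
      simp only [hg0] at hgj
      exact hgj
  -- integrability of compositions with T of functions bounded on [0,1]
  have hint : ∀ (ρ : Measure ℝ) [IsProbabilityMeasure ρ] (f : ℝ → ℝ), Continuous f →
      Integrable (fun a => f (T a)) ρ := by
    intro ρ _ f hf
    obtain ⟨C, hC⟩ := (isCompact_Icc (a := (0:ℝ)) (b := 1)).exists_bound_of_continuousOn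
      hf.continuousOn
    exact integrable_of_bounded (hf.comp T_cont) C (fun a => by
      simpa [Real.norm_eq_abs] using hC (T a) (T_mem a))
  have hpoly : ∀ p : Polynomial ℝ, ∫ a, p.eval (T a) ∂ν = ∫ a, p.eval (T a) ∂ν' := by
    intro p
    have hrw : ∀ (ρ : Measure ℝ) [IsProbabilityMeasure ρ],
        ∫ a, p.eval (T a) ∂ρ = ∑ i ∈ Finset.range (p.natDegree + 1),
          p.coeff i * ∫ a, (T a) ^ i ∂ρ := by
      intro ρ _
      have heval : ∀ a : ℝ, p.eval (T a) = ∑ i ∈ Finset.range (p.natDegree + 1),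
          p.coeff i * (T a) ^ i := fun a => Polynomial.eval_eq_sum_range (T a)
      rw [integral_congr_ae (Eventually.of_forall heval), integral_finset_sum]
      · exact Finset.sum_congr rfl fun i _ => integral_const_mul _ _
      · intro i _
        exact hint ρ (fun x => p.coeff i * x ^ i) (by fun_prop)
    rw [hrw ν, hrw ν']
    exact Finset.sum_congr rfl fun i _ => by rw [hmom i]
  have hcontf : ∀ f : ℝ → ℝ, Continuous f → ∫ a, f (T a) ∂ν = ∫ a, f (T a) ∂ν' := by
    intro f hf
    have key : ∀ ε : ℝ, 0 < ε → |∫ a, f (T a) ∂ν - ∫ a, f (T a) ∂ν'| ≤ 2 * ε := by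
      intro ε hε
      -- get a polynomial approximation on Icc 0 1
      set fc : C(Icc (0:ℝ) 1, ℝ) := ⟨fun x => f x.1, hf.comp continuous_subtype_val⟩ with hfc
      have hcl : fc ∈ closure ((polynomialFunctions (Icc (0:ℝ) 1) : Set (C(Icc (0:ℝ) 1, ℝ)))) := by
        rw [← Subalgebra.topologicalClosure_coe, polynomialFunctions_closure_eq_top 0 1]
        trivial
      obtain ⟨gq, hgmem, hdist⟩ := Metric.mem_closure_iff.mp hcl ε hε
      rw [polynomialFunctions_coe] at hgmem
      obtain ⟨p, hp⟩ := hgmem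
      have happrox : ∀ x : Icc (0:ℝ) 1, |f x.1 - p.eval x.1| ≤ ε := by
        intro x
        have h1 : dist (fc x) (gq x) ≤ dist fc gq := ContinuousMap.dist_apply_le_dist x
        have h2 : gq x = p.eval x.1 := by
          rw [← hp]
          simp [Polynomial.toContinuousMapOnAlgHom, Polynomial.toContinuousMapOn,
            Polynomial.toContinuousMap]
        rw [Real.dist_eq, h2] at h1
        have : (fc x) = f x.1 := rfl
        rw [this] at h1
        linarith [hdist.le]
      have hTin : ∀ a : ℝ, |f (T a) - p.eval (T a)| ≤ ε := fun a => happrox ⟨T a, T_mem a⟩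
      have hdiff : ∀ (ρ : Measure ℝ) [IsProbabilityMeasure ρ],
          |∫ a, f (T a) ∂ρ - ∫ a, p.eval (T a) ∂ρ| ≤ ε := by
        intro ρ _
        have hif : Integrable (fun a => f (T a)) ρ := hint ρ f hf
        have hip : Integrable (fun a => p.eval (T a)) ρ := hint ρ _ (p.continuous_aeval)
        rw [← integral_sub hif hip]
        calc |∫ a, (f (T a) - p.eval (T a)) ∂ρ| ≤ ∫ a, |f (T a) - p.eval (T a)| ∂ρ := by
              simpa [Real.norm_eq_abs] using
                norm_integral_le_integral_norm (fun a => f (T a) - p.eval (T a)) (μ := ρ)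
          _ ≤ ∫ _a, ε ∂ρ := integral_mono (hif.sub hip).abs (integrable_const _)
              (fun a => hTin a)
          _ = ε := by simp
      have h3 := hdiff ν
      have h4 := hdiff ν'
      have h5 := hpoly p
      set I1 := ∫ a, f (T a) ∂ν
      set I2 := ∫ a, f (T a) ∂ν'
      set P1 := ∫ a, p.eval (T a) ∂ν
      set P2 := ∫ a, p.eval (T a) ∂ν'
      calc |I1 - I2| = |(I1 - P1) + (P2 - I2)| := by rw [h5]; ring_nf
        _ ≤ |I1 - P1| + |P2 - I2| := abs_add_le _ _
        _ ≤ ε + ε := add_le_add h3 (by rwa [abs_sub_comm])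
        _ = 2 * ε := by ring
    by_contra hne
    have hd : 0 < |∫ a, f (T a) ∂ν - ∫ a, f (T a) ∂ν'| := by
      rw [abs_pos, sub_ne_zero]
      exact hne
    have := key (|∫ a, f (T a) ∂ν - ∫ a, f (T a) ∂ν'| / 4) (by linarith)
    linarith
  -- equality of pushforwards under T
  have hmap : ν.map T = ν'.map T := by
    haveI : IsProbabilityMeasure (ν.map T) := Measure.isProbabilityMeasure_map T_cont.measurable.aemeasurable
    haveI : IsProbabilityMeasure (ν'.map T) := Measure.isProbabilityMeasure_map T_cont.measurable.aemeasurable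
    refine ext_of_forall_lintegral_eq_of_IsFiniteMeasure (fun f => ?_)
    have hlin : ∀ (ρ : Measure ℝ) [IsProbabilityMeasure ρ],
        ∫⁻ x, (f x : ℝ≥0∞) ∂(ρ.map T) = ENNReal.ofReal (∫ a, (f (T a) : ℝ) ∂ρ) := by
      intro ρ _
      have h1 : ∫⁻ x, ((f x : ℝ≥0∞)) ∂(ρ.map T) = ∫⁻ a, ((f (T a) : ℝ≥0∞)) ∂ρ :=
        lintegral_map (measurable_coe_nnreal_ennreal.comp f.continuous.measurable)
          T_cont.measurable
      rw [h1]
      calc ∫⁻ a, ((f (T a) : ℝ≥0∞)) ∂ρ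
          = ∫⁻ a, ENNReal.ofReal ((f (T a) : ℝ)) ∂ρ :=
            lintegral_congr fun a => ENNReal.ofReal_coe_nnreal.symm
        _ = ENNReal.ofReal (∫ a, ((f (T a)) : ℝ) ∂ρ) :=
            (ofReal_integral_eq_lintegral_ofReal
              (hint ρ (fun x => (f x : ℝ)) (NNReal.continuous_coe.comp f.continuous))
              (Eventually.of_forall fun a => (f (T a)).coe_nonneg)).symm
    rw [hlin ν, hlin ν', hcontf (fun x => (f x : ℝ)) (NNReal.continuous_coe.comp f.continuous)]
  -- conclude via Iic sets
  refine Measure.ext_of_Iic ν ν' (fun x => ?_)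
  rcases lt_or_ge x 0 with hx | hx
  · rw [measure_mono_null (Iic_subset_Iio.2 hx) h0, measure_mono_null (Iic_subset_Iio.2 hx) h0']
  · have hpre : Iic x = T ⁻¹' (Ici (Real.exp (-x))) := by
      ext a
      simp only [mem_Iic, mem_preimage, mem_Ici, T, Real.exp_le_exp, neg_le_neg_iff]
      constructor
      · intro ha; exact max_le ha hx
      · intro ha; exact le_trans (le_max_left a 0) ha
    rw [hpre, ← Measure.map_apply T_cont.measurable measurableSet_Ici, hmap,
      Measure.map_apply T_cont.measurable measurableSet_Ici]


/-- Partial sums of the Poisson pmf are at most 1. -/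
lemma sm_le_one (M : ℕ) (a : ℝ) : ∑ m ∈ Finset.range M, g 1 m a ≤ 1 := by
  set b := max a 0 with hb
  have hb0 : (0:ℝ) ≤ b := le_max_right _ _
  have h1 : ∀ m, g 1 m a = Real.exp (-b) * (b ^ m / (Nat.factorial m)) := by
    intro m; unfold g; rw [← hb]; ring_nf
  calc ∑ m ∈ Finset.range M, g 1 m a
      = Real.exp (-b) * ∑ m ∈ Finset.range M, b ^ m / (Nat.factorial m) := by
        rw [Finset.mul_sum]; exact Finset.sum_congr rfl fun m _ => h1 m
    _ ≤ Real.exp (-b) * Real.exp b := by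
        apply mul_le_mul_of_nonneg_left (Real.sum_le_exp_of_nonneg hb0 M) (Real.exp_pos _).le
    _ = 1 := by rw [← Real.exp_add]; simp

/-- Uniform-in-measure tightness bound from convergence of the mixed-Poisson masses. -/
lemma tight (ν : ℕ → Measure ℝ) (hprob : ∀ k, IsProbabilityMeasure (ν k))
    (pr : ℕ → ℝ) (hsum : HasSum pr 1)
    (hconv : ∀ m, Tendsto (fun k => ∫ a, g 1 m a ∂(ν k)) atTop (𝓝 (pr m)))
    {ε : ℝ} (hε : 0 < ε) :
    ∃ K : ℝ, ∀ᶠ k in atTop, 1 - ε ≤ cdf (ν k) K := by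
  have hpart := hsum.tendsto_sum_nat
  obtain ⟨M, hM⟩ := (hpart.eventually (eventually_gt_nhds (show 1 - ε/2 < 1 by linarith))).exists
  -- choose K with ∑_{m<M} g 1 m a ≤ 1/2 for a ≥ K
  set CM : ℝ := 1 + ∑ m ∈ Finset.range M, (2:ℝ) ^ m with hCM
  have hCMpos : 0 < CM := by
    rw [hCM]
    have : (0:ℝ) ≤ ∑ m ∈ Finset.range M, (2:ℝ) ^ m :=
      Finset.sum_nonneg fun m _ => by positivity
    linarith
  have hdecay : Tendsto (fun a : ℝ => CM * Real.exp (-(a/2))) atTop (𝓝 0) := by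
    rw [show (0:ℝ) = CM * 0 by ring]
    apply Tendsto.const_mul
    have hlin : Tendsto (fun a : ℝ => -(a/2)) atTop atBot :=
      tendsto_neg_atTop_atBot.comp (tendsto_id.atTop_div_const two_pos)
    exact Real.tendsto_exp_atBot.comp hlin
  obtain ⟨K, hK0, hKdec⟩ : ∃ K : ℝ, 0 ≤ K ∧ CM * Real.exp (-(K/2)) ≤ 1/2 := by
    have h2 := hdecay.eventually (eventually_le_nhds (show (0:ℝ) < 1/2 by norm_num))
    obtain ⟨K, hK⟩ := (h2.and (eventually_ge_atTop (0:ℝ))).exists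
    exact ⟨K, hK.2, hK.1⟩
  have hSM : ∀ a : ℝ, K ≤ a → ∑ m ∈ Finset.range M, g 1 m a ≤ 1/2 := by
    intro a ha
    have hb : max a 0 = a := max_eq_left (le_trans hK0 ha)
    have h1 : ∀ m, m ∈ Finset.range M → g 1 m a ≤ (2:ℝ)^m * Real.exp (-(a/2)) := by
      intro m _
      have h := g_le 1 1 one_pos le_rfl m a
      rw [hb] at h
      calc g 1 m a ≤ (2/1:ℝ)^m * Real.exp (-(1/2 * a)) := h
        _ = (2:ℝ)^m * Real.exp (-(a/2)) := by
            rw [show -((1:ℝ)/2 * a) = -(a/2) by ring]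
            norm_num
    calc ∑ m ∈ Finset.range M, g 1 m a ≤ ∑ m ∈ Finset.range M, (2:ℝ)^m * Real.exp (-(a/2)) :=
          Finset.sum_le_sum h1
      _ = (∑ m ∈ Finset.range M, (2:ℝ)^m) * Real.exp (-(a/2)) := by
          rw [Finset.sum_mul]
      _ ≤ CM * Real.exp (-(a/2)) := by
          apply mul_le_mul_of_nonneg_right _ (Real.exp_pos _).le
          rw [hCM]
          linarith
      
      _ ≤ CM * Real.exp (-(K/2)) := by
          apply mul_le_mul_of_nonneg_left _ hCMpos.le
          apply Real.exp_le_exp.2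
          linarith
      _ ≤ 1/2 := hKdec
  refine ⟨K, ?_⟩
  have hconvsum : Tendsto (fun k => ∑ m ∈ Finset.range M, ∫ a, g 1 m a ∂(ν k)) atTop
      (𝓝 (∑ m ∈ Finset.range M, pr m)) := tendsto_finset_sum _ (fun m _ => hconv m)
  filter_upwards [hconvsum.eventually (eventually_gt_nhds hM)] with k hk
  haveI := hprob k
  set P := ν k with hP
  set SM : ℝ → ℝ := fun a => ∑ m ∈ Finset.range M, g 1 m a with hSMdef
  have hSMcont : Continuous SM := continuous_finset_sum _ (fun m _ => g_cont 1 m)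
  have hSMnn : ∀ a, 0 ≤ SM a := fun a => Finset.sum_nonneg (fun m _ => g_nonneg 1 m a)
  have hSMint : Integrable SM P := integrable_finset_sum _ (fun m _ => g_integrable one_pos m)
  have hSint : ∫ a, SM a ∂P = ∑ m ∈ Finset.range M, ∫ a, g 1 m a ∂P :=
    integral_finset_sum _ (fun m _ => g_integrable one_pos m)
  -- bound the tail measure
  have key : (P (Ioi K)).toReal ≤ ε := by
    have h2 : ∫ a, (1 - SM a) ∂P = 1 - ∫ a, SM a ∂P := by
      rw [integral_sub (integrable_const 1) hSMint]
      simp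
    have h3 : ∫ a in Ioi K, (1 - SM a) ∂P ≤ ∫ a, (1 - SM a) ∂P :=
      setIntegral_le_integral ((integrable_const 1).sub hSMint)
        (Eventually.of_forall fun a => by simpa using sm_le_one M a)
    have hint2 : Integrable (fun a => 1 - SM a) P := (integrable_const 1).sub hSMint
    have h4 : (P (Ioi K)).toReal * (1/2) ≤ ∫ a in Ioi K, (1 - SM a) ∂P := by
      have := setIntegral_mono_on (integrable_const (1/2:ℝ)).integrableOn
        hint2.integrableOn measurableSet_Ioi
        (fun a ha => by
          have := hSM a (le_of_lt ha)
          simp only [hSMdef]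
          linarith)
      simpa [setIntegral_const, smul_eq_mul, Measure.real] using this
    have h5 : ∫ a, SM a ∂P > 1 - ε/2 := by rw [hSint]; exact hk
    nlinarith [measure_ne_top P (Ioi K)]
  -- convert to cdf bound
  have hcdf : cdf P K = 1 - (P (Ioi K)).toReal := by
    have h1 : P (Iic K) + P (Ioi K) = 1 := by
      rw [← measure_union (Iic_disjoint_Ioi le_rfl) measurableSet_Ioi, Iic_union_Ioi,
        measure_univ]
    have h2 : (P (Iic K)).toReal + (P (Ioi K)).toReal = 1 := by
      rw [← ENNReal.toReal_add (measure_ne_top _ _) (measure_ne_top _ _), h1]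
      simp
    have h3 : cdf P K = (P (Iic K)).toReal := by
      rw [← ofReal_cdf P K, ENNReal.toReal_ofReal (cdf_nonneg P K)]
    linarith
  rw [hcdf]
  linarith


/-- Logistic sigmoid. -/
def sig (t : ℝ) : ℝ := (1 + Real.exp (-t))⁻¹

lemma sig_pos (t : ℝ) : 0 < sig t := by
  unfold sig
  positivity

lemma sig_lt_one (t : ℝ) : sig t < 1 := by
  unfold sig
  rw [inv_lt_one_iff₀]
  right
  linarith [Real.exp_pos (-t)]

lemma sig_strictMono : StrictMono sig := by
  intro s t hst
  unfold sig
  apply inv_strictAnti₀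
  · positivity
  · have := Real.exp_lt_exp.2 (neg_lt_neg hst)
    linarith

lemma sig_cont : Continuous sig := by
  unfold sig
  have h : ∀ t : ℝ, 1 + Real.exp (-t) ≠ 0 := fun t => by positivity
  fun_prop (disch := intros; positivity)

/-- Inverse of the sigmoid on `(0,1)`. -/
def jmap (u : ℝ) : ℝ := Real.log (u / (1 - u))

lemma jmap_measurable : Measurable jmap :=
  Real.measurable_log.comp (measurable_id.div (measurable_const.sub measurable_id))

lemma sig_jmap {u : ℝ} (hu : u ∈ Ioo (0:ℝ) 1) : sig (jmap u) = u := by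
  obtain ⟨h0, h1⟩ := hu
  have h2 : 0 < 1 - u := by linarith
  have h3 : 0 < u / (1 - u) := by positivity
  rw [sig, jmap, ← Real.log_inv, Real.exp_log (by positivity)]
  field_simp
  ring

/-- The logistic measure: pushforward of uniform on `(0,1)` by `jmap`. -/
def lam : Measure ℝ := (volume.restrict (Ioo (0:ℝ) 1)).map jmap

instance : IsProbabilityMeasure lam := by
  have : IsProbabilityMeasure (volume.restrict (Ioo (0:ℝ) 1)) := by
    constructor
    rw [Measure.restrict_apply_univ, Real.volume_Ioo]
    norm_num
  exact Measure.isProbabilityMeasure_map jmap_measurable.aemeasurable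

lemma lam_sig_le {y : ℝ} (hy : y ∈ Icc (0:ℝ) 1) : lam {t | sig t ≤ y} = ENNReal.ofReal y := by
  have hset : MeasurableSet {t | sig t ≤ y} := by
    have : {t | sig t ≤ y} = sig ⁻¹' (Iic y) := rfl
    rw [this]
    exact sig_cont.measurable measurableSet_Iic
  rw [lam, Measure.map_apply jmap_measurable hset,
    Measure.restrict_apply' measurableSet_Ioo]
  have hpre : jmap ⁻¹' {t | sig t ≤ y} ∩ Ioo 0 1 = {u | u ∈ Ioo (0:ℝ) 1 ∧ u ≤ y} := by
    ext u
    simp only [mem_inter_iff, mem_preimage, mem_setOf_eq, mem_Ioo]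
    constructor
    · rintro ⟨hle, hu⟩
      exact ⟨hu, by rwa [sig_jmap hu] at hle⟩
    · rintro ⟨hu, hle⟩
      exact ⟨by rwa [sig_jmap hu], hu⟩
  rw [hpre]
  rcases eq_or_lt_of_le hy.2 with h1 | h1
  · have : {u | u ∈ Ioo (0:ℝ) 1 ∧ u ≤ y} = Ioo 0 1 := by
      ext u
      simp only [mem_setOf_eq, mem_Ioo]
      exact ⟨fun h => h.1, fun h => ⟨h, h1 ▸ h.2.le⟩⟩
    rw [this, Real.volume_Ioo, ← h1]
    norm_num
  · have : {u | u ∈ Ioo (0:ℝ) 1 ∧ u ≤ y} = Ioc 0 y := by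
      ext u
      simp only [mem_setOf_eq, mem_Ioo, mem_Ioc]
      exact ⟨fun h => ⟨h.1.1, h.2⟩, fun h => ⟨⟨h.1, lt_of_le_of_lt h.2 h1⟩, h.2⟩⟩
    rw [this, Real.volume_Ioc]
    norm_num

/-- Quantile function of a cdf-like function via the sigmoid parametrization. -/
def quant (H : ℝ → ℝ) (t : ℝ) : ℝ := sInf {x | sig t ≤ H x}

section Quantile
variable {H : ℝ → ℝ} (hmono : Monotone H)
  (hrc : ∀ x, ContinuousWithinAt H (Ici x) x)
  (h0 : Tendsto H atBot (𝓝 0)) (h1 : Tendsto H atTop (𝓝 1))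

include h1 in
lemma quant_nonempty (t : ℝ) : {x | sig t ≤ H x}.Nonempty := by
  have := (h1.eventually (eventually_ge_nhds (sig_lt_one t))).exists
  exact this

include h0 in
lemma quant_bddBelow (t : ℝ) : BddBelow {x | sig t ≤ H x} := by
  obtain ⟨z, hz⟩ := (eventually_atBot.1 (h0.eventually (eventually_lt_nhds (sig_pos t))))
  refine ⟨z, fun x hx => ?_⟩
  by_contra hzx
  push_neg at hzx
  exact absurd hx (not_le.2 (hz x hzx.le))

include hmono hrc h0 h1 in
lemma quant_mem (t : ℝ) : sig t ≤ H (quant H t) := by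
  have hne := quant_nonempty (H := H) h1 t
  have hbdd := quant_bddBelow (H := H) h0 t
  have hall : ∀ y ∈ Ioi (quant H t), sig t ≤ H y := by
    intro y hy
    obtain ⟨x, hx, hxy⟩ := (csInf_lt_iff hbdd hne).1 hy
    exact le_trans hx (hmono hxy.le)
  exact ge_of_tendsto ((hrc (quant H t)).mono_left (nhdsWithin_mono _ Ioi_subset_Ici_self))
    (eventually_nhdsWithin_of_forall hall)

include hmono hrc h0 h1 in
lemma quant_le_iff {t x : ℝ} : quant H t ≤ x ↔ sig t ≤ H x := by
  constructor
  · intro hle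
    exact le_trans (quant_mem hmono hrc h0 h1 t) (hmono hle)
  · intro hx
    exact csInf_le (quant_bddBelow (H := H) h0 t) hx

include h0 h1 in
lemma quant_mono : Monotone (quant H) := by
  intro s t hst
  apply csInf_le_csInf (quant_bddBelow (H := H) h0 s) (quant_nonempty (H := H) h1 t)
  intro x hx
  exact le_trans (sig_strictMono.monotone hst) hx

include hmono hrc h0 h1 in
lemma quant_measurable : Measurable (quant H) :=
  (quant_mono (H := H) h0 h1).measurable

include hmono hrc h0 h1 in
lemma lam_map_quant (P : Measure ℝ) [IsProbabilityMeasure P]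
    (hH : ∀ x, ENNReal.ofReal (H x) = P (Iic x)) (hrange : ∀ x, H x ∈ Icc (0:ℝ) 1) :
    lam.map (quant H) = P := by
  refine Measure.ext_of_Iic _ _ (fun x => ?_)
  rw [Measure.map_apply (quant_measurable hmono hrc h0 h1) measurableSet_Iic]
  have hset : quant H ⁻¹' (Iic x) = {t | sig t ≤ H x} := by
    ext t
    simp only [mem_preimage, mem_Iic, mem_setOf_eq]
    exact quant_le_iff hmono hrc h0 h1
  rw [hset, lam_sig_le (hrange x), hH x]

end Quantile


lemma exists_continuousAt_between {F : ℝ → ℝ} (hF : Monotone F) {a b : ℝ} (hab : a < b) :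
    ∃ x, a < x ∧ x < b ∧ ContinuousAt F x := by
  by_contra hc
  push_neg at hc
  have hsub : Ioo a b ⊆ {x | ¬ContinuousAt F x} := fun x hx => hc x hx.1 hx.2
  have h0 : volume (Ioo a b) = 0 :=
    measure_mono_null hsub (hF.countable_not_continuousAt.measure_zero volume)
  rw [Real.volume_Ioo] at h0
  simp only [ENNReal.ofReal_eq_zero, sub_nonpos] at h0
  exact absurd h0 (not_le.2 hab)

/-- Helly-type selection with limit identification via quantile coupling. -/
lemma selection (ν : ℕ → Measure ℝ) (hprob : ∀ k, IsProbabilityMeasure (ν k))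
    (h00 : ∀ k, ν k (Iio 0) = 0)
    (pr : ℕ → ℝ) (hsum : HasSum pr 1)
    (hconv : ∀ m, Tendsto (fun k => ∫ a, g 1 m a ∂(ν k)) atTop (𝓝 (pr m))) :
    ∃ (ms : ℕ → ℕ) (L : Measure ℝ), StrictMono ms ∧ IsProbabilityMeasure L ∧ L (Iio 0) = 0 ∧
      ∀ f : BoundedContinuousFunction ℝ ℝ,
        Tendsto (fun k => ∫ a, f a ∂(ν (ms k))) atTop (𝓝 (∫ a, f a ∂L)) := by
  haveI := hprob
  -- extract a subsequence along which the cdfs converge at all rationals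
  haveI : CompactSpace (Icc (0:ℝ) 1) := isCompact_iff_compactSpace.1 isCompact_Icc
  set seq : ℕ → (ℚ → Icc (0:ℝ) 1) :=
    fun k q => ⟨cdf (ν k) q, cdf_nonneg _ _, cdf_le_one _ _⟩ with hseq
  obtain ⟨G, -, ms, hms, hGconv⟩ := isCompact_univ.tendsto_subseq (x := seq)
    (fun k => mem_univ _)
  have hGq : ∀ q : ℚ, Tendsto (fun k => cdf (ν (ms k)) (q:ℝ)) atTop (𝓝 ((G q : ℝ))) := by
    intro q
    have h1 := tendsto_pi_nhds.1 hGconv q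
    exact (continuous_subtype_val.tendsto _).comp h1
  -- monotonicity and negativity of G
  have hGmono : ∀ q q' : ℚ, q ≤ q' → (G q : ℝ) ≤ (G q' : ℝ) := by
    intro q q' h
    exact le_of_tendsto_of_tendsto' (hGq q) (hGq q')
      (fun k => (cdf (ν (ms k))).mono (by exact_mod_cast h))
  have hG0 : ∀ q : ℚ, q < 0 → (G q : ℝ) = 0 := by
    intro q hq
    have hz : ∀ k, cdf (ν (ms k)) (q:ℝ) = 0 := by
      intro k
      have hq' : (q:ℝ) < 0 := by exact_mod_cast hq
      have hsub : Iic ((q:ℝ)) ⊆ Iio 0 := fun x hx => mem_Iio.2 (lt_of_le_of_lt hx hq')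
      have h1 := measure_mono_null hsub (h00 (ms k))
      have h2 := ofReal_cdf (ν (ms k)) (q:ℝ)
      rw [h1, ENNReal.ofReal_eq_zero] at h2
      exact le_antisymm h2 (cdf_nonneg _ _)
    have hzz : Tendsto (fun k => cdf (ν (ms k)) (q:ℝ)) atTop (𝓝 0) := by
      simp only [hz]
      exact tendsto_const_nhds
    exact tendsto_nhds_unique (hGq q) hzz
  -- tightness of the limit
  have hGtight : ∀ ε : ℝ, 0 < ε → ∃ Kq : ℚ, ∀ q : ℚ, Kq ≤ q → 1 - ε ≤ (G q : ℝ) := by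
    intro ε hε
    obtain ⟨K, hK⟩ := tight (fun k => ν (ms k)) (fun k => hprob (ms k)) pr hsum
      (fun m => (hconv m).comp hms.tendsto_atTop) hε
    obtain ⟨Kq, hKq⟩ := exists_rat_gt K
    refine ⟨Kq, fun q hq => ?_⟩
    refine ge_of_tendsto (hGq q) ?_
    filter_upwards [hK] with k hk
    refine le_trans hk ((cdf (ν (ms k))).mono ?_)
    calc K ≤ Kq := hKq.le
      _ ≤ q := by exact_mod_cast hq
  -- the limiting cdf
  have hne : ∀ x : ℝ, Nonempty {q : ℚ // x < (q:ℝ)} := fun x =>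
    let ⟨q, hq⟩ := exists_rat_gt x; ⟨⟨q, hq⟩⟩
  haveI := hne
  set F : ℝ → ℝ := fun x => ⨅ q : {q : ℚ // x < (q:ℝ)}, (G q.1 : ℝ) with hFdef
  have hbddF : ∀ x : ℝ, BddBelow (range fun q : {q : ℚ // x < (q:ℝ)} => (G q.1 : ℝ)) :=
    fun x => ⟨0, forall_mem_range.2 fun q => (G q.1).2.1⟩
  have hF_le : ∀ (x : ℝ) (q : ℚ), x < q → F x ≤ (G q : ℝ) :=
    fun x q h => ciInf_le (hbddF x) ⟨q, h⟩
  have hle_F : ∀ (x : ℝ) (q : ℚ), (q:ℝ) ≤ x → (G q : ℝ) ≤ F x := by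
    intro x q h
    refine le_ciInf fun q' => hGmono q q'.1 ?_
    exact_mod_cast le_of_lt (lt_of_le_of_lt h q'.2)
  have hFmono : Monotone F := by
    intro x y hxy
    refine le_ciInf fun q => hF_le x q.1 (lt_of_le_of_lt hxy q.2)
  have hFnn : ∀ x, 0 ≤ F x := fun x => le_ciInf fun q => (G q.1).2.1
  have hFle1 : ∀ x, F x ≤ 1 := by
    intro x
    obtain ⟨q, hq⟩ := exists_rat_gt x
    exact le_trans (hF_le x q hq) (G q).2.2
  have hFneg : ∀ x : ℝ, x < 0 → F x = 0 := by
    intro x hx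
    obtain ⟨q, hq1, hq2⟩ := exists_rat_btwn hx
    refine le_antisymm ?_ (hFnn x)
    refine le_trans (hF_le x q hq1) ?_
    rw [hG0 q (by exact_mod_cast hq2)]
  have hFrc : ∀ x, ContinuousWithinAt F (Ici x) x := by
    intro x
    rw [ContinuousWithinAt]
    refine tendsto_order.2 ⟨fun a ha => ?_, fun b hb => ?_⟩
    · filter_upwards [self_mem_nhdsWithin] with y hy
      exact lt_of_lt_of_le ha (hFmono hy)
    · obtain ⟨q, hq⟩ := exists_lt_of_ciInf_lt hb
      filter_upwards [Ico_mem_nhdsGE_of_mem (by exact ⟨le_rfl, q.2⟩ :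
          x ∈ Ico x (q.1 : ℝ))] with y hy
      exact lt_of_le_of_lt (hF_le y q.1 hy.2) hq
  have hFbot : Tendsto F atBot (𝓝 0) := by
    have hev : (fun _ : ℝ => (0:ℝ)) =ᶠ[atBot] F :=
      eventually_atBot.2 ⟨-1, fun x hx => (hFneg x (by linarith)).symm⟩
    exact Tendsto.congr' hev tendsto_const_nhds
  have hFtop : Tendsto F atTop (𝓝 1) := by
    refine tendsto_order.2 ⟨fun a ha => ?_, fun b hb => ?_⟩
    · obtain ⟨Kq, hKq⟩ := hGtight ((1 - a)/2) (by linarith)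
      filter_upwards [eventually_ge_atTop ((Kq : ℝ))] with x hx
      have h1 : (G Kq : ℝ) ≤ F x := hle_F x Kq hx
      have h2 := hKq Kq le_rfl
      linarith
    · filter_upwards with x
      exact lt_of_le_of_lt (hFle1 x) hb
  set FS : StieltjesFunction ℝ := ⟨F, hFmono, hFrc⟩ with hFS
  set L : Measure ℝ := FS.measure with hL
  haveI hLprob : IsProbabilityMeasure L :=
    ⟨by rw [hL, FS.measure_univ hFbot hFtop]; simp⟩
  have hL0 : L (Iio 0) = 0 := by
    have hun : Iio (0:ℝ) = ⋃ n : ℕ, Iic (-(1:ℝ)/(n+1)) := by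
      ext x
      simp only [mem_Iio, mem_iUnion, mem_Iic]
      constructor
      · intro hx
        obtain ⟨n, hn⟩ := exists_nat_one_div_lt (show (0:ℝ) < -x by linarith)
        refine ⟨n, ?_⟩
        have he : -(1:ℝ)/(n+1) = -(1/(n+1)) := by ring
        rw [he]
        linarith
      · intro ⟨n, hn⟩
        have : -(1:ℝ)/(n+1) < 0 := by
          apply div_neg_of_neg_of_pos <;> [linarith; positivity]
        linarith
    rw [hun]
    refine measure_iUnion_null fun n => ?_
    have hneg : (-(1:ℝ)/(n+1)) < 0 := by
      apply div_neg_of_neg_of_pos <;> [linarith; positivity]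
    rw [hL, FS.measure_Iic hFbot]
    simp only [hFneg _ hneg, sub_zero, ENNReal.ofReal_zero]
    exact ENNReal.ofReal_eq_zero.2 (hFneg _ hneg).le
  have hcdfL : ∀ x, ENNReal.ofReal (F x) = L (Iic x) := by
    intro x
    rw [hL, FS.measure_Iic hFbot, sub_zero]
  -- convergence of cdfs at continuity points of F
  have hcdfconv : ∀ x : ℝ, ContinuousAt F x →
      Tendsto (fun k => cdf (ν (ms k)) x) atTop (𝓝 (F x)) := by
    intro x hx
    refine tendsto_order.2 ⟨fun a ha => ?_, fun b hb => ?_⟩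
    · have h1 : ∀ᶠ y in 𝓝 x, a < F y := hx.eventually (eventually_gt_nhds ha)
      obtain ⟨y, hay, hyx⟩ : ∃ y, a < F y ∧ y < x := by
        have h2 := h1.filter_mono (nhdsWithin_le_nhds (s := Iio x))
        exact ((h2.and (eventually_mem_nhdsWithin)).exists).imp
          (fun y hy => ⟨hy.1, hy.2⟩)
      obtain ⟨q, hq1, hq2⟩ := exists_rat_btwn hyx
      have h3 : a < (G q : ℝ) := lt_of_lt_of_le hay (hF_le y q hq1)
      filter_upwards [(hGq q).eventually (eventually_gt_nhds h3)] with k hk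
      exact lt_of_lt_of_le hk ((cdf (ν (ms k))).mono hq2.le)
    · obtain ⟨q, hq⟩ := exists_lt_of_ciInf_lt hb
      filter_upwards [(hGq q.1).eventually (eventually_lt_nhds hq)] with k hk
      exact lt_of_le_of_lt ((cdf (ν (ms k))).mono (le_of_lt q.2)) hk
  -- quantile functions
  set X : ℝ → ℝ := quant F with hX
  have hXmono : Monotone X := quant_mono hFbot hFtop
  -- properties of the cdfs of ν (ms k)
  have cdfmono : ∀ k : ℕ, Monotone (fun x => cdf (ν (ms k)) x) := fun k => (cdf (ν (ms k))).mono
  have cdfrc : ∀ k : ℕ, ∀ x, ContinuousWithinAt (fun x => cdf (ν (ms k)) x) (Ici x) x :=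
    fun k x => (cdf (ν (ms k))).right_continuous x
  have cdfbot : ∀ k : ℕ, Tendsto (fun x => cdf (ν (ms k)) x) atBot (𝓝 0) :=
    fun k => tendsto_cdf_atBot (ν (ms k))
  have cdftop : ∀ k : ℕ, Tendsto (fun x => cdf (ν (ms k)) x) atTop (𝓝 1) :=
    fun k => tendsto_cdf_atTop (ν (ms k))
  -- convergence of quantiles at continuity points of X
  have hquantconv : ∀ t : ℝ, ContinuousAt X t →
      Tendsto (fun k => quant (fun x => cdf (ν (ms k)) x) t) atTop (𝓝 (X t)) := by
    intro t ht
    refine tendsto_order.2 ⟨fun a ha => ?_, fun b hb => ?_⟩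
    · -- lower bound
      have hmax : max a (X t - 1) < X t := max_lt ha (by linarith)
      obtain ⟨x, hax, hxX, hxcont⟩ := exists_continuousAt_between hFmono hmax
      have hax' : a < x := lt_of_le_of_lt (le_max_left _ _) hax
      have hFx : F x < sig t := by
        by_contra hge
        push_neg at hge
        have := (quant_le_iff hFmono hFrc hFbot hFtop (t := t) (x := x)).2 hge
        rw [← hX] at this
        linarith
      filter_upwards [(hcdfconv x hxcont).eventually (eventually_lt_nhds hFx)] with k hk
      have hnle : ¬ (quant (fun x => cdf (ν (ms k)) x) t ≤ x) := by
        rw [quant_le_iff (cdfmono k) (cdfrc k) (cdfbot k) (cdftop k)]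
        exact not_le.2 hk
      push_neg at hnle
      exact lt_trans hax' hnle
    · -- upper bound
      have h1 : ∀ᶠ s in 𝓝 t, X s < b := ht.eventually (eventually_lt_nhds hb)
      obtain ⟨t', hXt', htt'⟩ : ∃ t', X t' < b ∧ t < t' := by
        have h2 := h1.filter_mono (nhdsWithin_le_nhds (s := Ioi t))
        exact ((h2.and (eventually_mem_nhdsWithin)).exists).imp (fun y hy => ⟨hy.1, hy.2⟩)
      obtain ⟨y, hy1, hy2, hycont⟩ := exists_continuousAt_between hFmono hXt'
      have hFy : sig t < F y := by
        have hm := quant_mem hFmono hFrc hFbot hFtop t'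
        rw [← hX] at hm
        exact lt_of_lt_of_le (sig_strictMono htt') (le_trans hm (hFmono hy1.le))
      filter_upwards [(hcdfconv y hycont).eventually (eventually_gt_nhds hFy)] with k hk
      have hle : quant (fun x => cdf (ν (ms k)) x) t ≤ y :=
        (quant_le_iff (cdfmono k) (cdfrc k) (cdfbot k) (cdftop k)).2 hk.le
      exact lt_of_le_of_lt hle hy2
  -- almost everywhere convergence under lam
  have haeconv : ∀ᵐ t ∂lam,
      Tendsto (fun k => quant (fun x => cdf (ν (ms k)) x) t) atTop (𝓝 (X t)) := by
    have hcount : Set.Countable {t | ¬ContinuousAt X t} := hXmono.countable_not_continuousAt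
    have hnull : lam {t | ¬ContinuousAt X t} = 0 := by
      rw [lam, Measure.map_apply jmap_measurable hcount.measurableSet,
        Measure.restrict_apply' measurableSet_Ioo]
      refine measure_mono_null (fun u hu => ?_) ((hcount.image sig).measure_zero volume)
      obtain ⟨hu1, hu2⟩ := hu
      exact ⟨jmap u, hu1, sig_jmap hu2⟩
    rw [ae_iff]
    refine measure_mono_null (fun t ht => ?_) hnull
    simp only [mem_setOf_eq] at ht ⊢
    intro hcont
    exact ht (hquantconv t hcont)
  -- identification of the pushforwards
  have hmapk : ∀ k, lam.map (quant (fun x => cdf (ν (ms k)) x)) = ν (ms k) := by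
    intro k
    exact lam_map_quant (cdfmono k) (cdfrc k) (cdfbot k) (cdftop k) (ν (ms k))
      (fun x => ofReal_cdf _ x) (fun x => ⟨cdf_nonneg _ _, cdf_le_one _ _⟩)
  have hmapL : lam.map X = L := by
    rw [hX]
    exact lam_map_quant hFmono hFrc hFbot hFtop L hcdfL (fun x => ⟨hFnn x, hFle1 x⟩)
  -- conclusion via dominated convergence
  refine ⟨ms, L, hms, hLprob, hL0, fun f => ?_⟩
  have h1 : ∀ k, ∫ a, f a ∂(ν (ms k)) = ∫ t, f (quant (fun x => cdf (ν (ms k)) x) t) ∂lam := by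
    intro k
    conv_lhs => rw [← hmapk k]
    rw [integral_map
      (quant_measurable (cdfmono k) (cdfrc k) (cdfbot k) (cdftop k)).aemeasurable
      f.continuous.aestronglyMeasurable]
  have h2 : ∫ a, f a ∂L = ∫ t, f (X t) ∂lam := by
    conv_lhs => rw [← hmapL]
    rw [integral_map
      (quant_measurable hFmono hFrc hFbot hFtop).aemeasurable
      f.continuous.aestronglyMeasurable]
  rw [h2]
  have h3 := tendsto_integral_of_dominated_convergence (μ := lam)
    (F := fun k t => f (quant (fun x => cdf (ν (ms k)) x) t)) (f := fun t => f (X t))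
    (fun _ => ‖f‖)
    (fun k => (f.continuous.comp_aestronglyMeasurable
      (quant_measurable (cdfmono k) (cdfrc k) (cdfbot k) (cdftop k)).aestronglyMeasurable))
    (integrable_const _)
    (fun k => Eventually.of_forall fun t => f.norm_coe_le_norm _)
    (by
      filter_upwards [haeconv] with t ht
      exact ((f.continuous.tendsto _).comp ht))
  have heq : (fun k => ∫ a, f a ∂(ν (ms k)))
      = fun k => ∫ t, f (quant (fun x => cdf (ν (ms k)) x) t) ∂lam := funext h1
  rw [heq]
  exact h3


/-- `g 1 m` as a bounded continuous function. -/
def gbcf (m : ℕ) : BoundedContinuousFunction ℝ ℝ :=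
  BoundedContinuousFunction.ofNormedAddCommGroup (g 1 m) (g_cont 1 m) ((2:ℝ)^m)
    (fun a => by
      rw [Real.norm_eq_abs, abs_of_nonneg (g_nonneg 1 m a)]
      have := g_le' 1 1 one_pos le_rfl m a
      norm_num at this
      exact this)

lemma gbcf_coe (m : ℕ) (a : ℝ) : gbcf m a = g 1 m a := rfl

end MixedPoissonAux
end

open MixedPoissonAux

/-- **Limits of mixed Poisson laws are mixed Poisson.**
If `Z_n` is mixed Poisson with mixing variable `A_n ≥ 0` (i.e. `Z_n = π*(A_n)` in
distribution for a unit-rate Poisson process `π*` independent of `A_n`) and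
`Z_n → Z` in distribution with `Z` proper and nondegenerate, then the `A_n`
converge in distribution to some `A ≥ 0` and `Z` is mixed Poisson:
`P{Z = m} = E[e^{−A} A^m/m!]`. -/
theorem limit_of_mixed_poisson_is_mixed_poisson
    {Ω : Type*} [MeasurableSpace Ω] (μ : Measure Ω) [IsProbabilityMeasure μ]
    (A : ℕ → Ω → ℝ) (hAmeas : ∀ n, Measurable (A n))
    (hA0 : ∀ n, ∀ᵐ ω ∂μ, 0 ≤ A n ω)
    (Z : ℕ → Ω → ℕ) (hZmeas : ∀ n, Measurable (Z n))
    -- each `Z n` is mixed Poisson with mixing variable `A n`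
    (hmix : ∀ n m, μ {ω | Z n ω = m}
      = ∫⁻ ω, ENNReal.ofReal (Real.exp (-A n ω) * (A n ω) ^ m / (Nat.factorial m)) ∂μ)
    -- convergence in distribution of the `ℕ`-valued `Z n` to a proper `Zlim`
    (Zlim : Ω → ℕ) (hZlimmeas : Measurable Zlim)
    (hconv : ∀ m, Tendsto (fun n => μ {ω | Z n ω = m}) atTop (nhds (μ {ω | Zlim ω = m})))
    (hnondeg : ¬ ∃ c : ℕ, μ {ω | Zlim ω = c} = 1) :
    ∃ ν : Measure ℝ, IsProbabilityMeasure ν ∧ ν (Set.Iio 0) = 0 ∧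
      (∀ f : BoundedContinuousFunction ℝ ℝ,
        Tendsto (fun n => ∫ ω, f (A n ω) ∂μ) atTop (nhds (∫ a, f a ∂ν))) ∧
      (∀ m : ℕ, μ {ω | Zlim ω = m}
        = ∫⁻ a, ENNReal.ofReal (Real.exp (-a) * a ^ m / (Nat.factorial m)) ∂ν) := by
  classical
  set νn : ℕ → Measure ℝ := fun n => μ.map (A n) with hνn
  haveI hprobn : ∀ n, IsProbabilityMeasure (νn n) :=
    fun n => Measure.isProbabilityMeasure_map (hAmeas n).aemeasurable
  have hν00 : ∀ n, νn n (Set.Iio 0) = 0 := by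
    intro n
    rw [hνn, Measure.map_apply (hAmeas n) measurableSet_Iio]
    have hset : A n ⁻¹' (Set.Iio 0) = {ω | ¬ (0 ≤ A n ω)} := by
      ext ω; simp [not_le]
    rw [hset]
    exact ae_iff.1 (hA0 n)
  set p : ℕ → ℝ≥0∞ := fun m => μ {ω | Zlim ω = m} with hp
  have hp_fin : ∀ m, p m ≠ ⊤ := fun m => measure_ne_top μ _
  set pr : ℕ → ℝ := fun m => (p m).toReal with hpr
  have hprnn : ∀ m, 0 ≤ pr m := fun m => ENNReal.toReal_nonneg
  -- the mixed-Poisson identity in integral form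
  have hkey : ∀ n m, μ {ω | Z n ω = m} = ENNReal.ofReal (∫ a, g 1 m a ∂(νn n)) := by
    intro n m
    rw [hmix n m]
    have h1 : ∫⁻ ω, ENNReal.ofReal (Real.exp (-A n ω) * (A n ω) ^ m / (Nat.factorial m)) ∂μ
        = ∫⁻ ω, ENNReal.ofReal (g 1 m (A n ω)) ∂μ := by
      refine lintegral_congr_ae ?_
      filter_upwards [hA0 n] with ω hω
      rw [g]
      rw [max_eq_left hω, one_mul]
    have h2 : ∫⁻ ω, ENNReal.ofReal (g 1 m (A n ω)) ∂μ
        = ∫⁻ a, ENNReal.ofReal (g 1 m a) ∂(νn n) :=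
      (lintegral_map (f := fun a => ENNReal.ofReal (g 1 m a))
        (ENNReal.measurable_ofReal.comp (g_cont 1 m).measurable) (hAmeas n)).symm
    rw [h1, h2, ← ofReal_integral_eq_lintegral_ofReal (g_integrable one_pos m)
      (Eventually.of_forall fun a => g_nonneg 1 m a)]
  -- convergence of the real integrals
  have hconv' : ∀ m, Tendsto (fun n => ∫ a, g 1 m a ∂(νn n)) atTop (𝓝 (pr m)) := by
    intro m
    have h1 : Tendsto (fun n => (μ {ω | Z n ω = m}).toReal) atTop (𝓝 (pr m)) :=
      (ENNReal.tendsto_toReal (hp_fin m)).comp (hconv m)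
    refine h1.congr fun n => ?_
    rw [hkey n m, ENNReal.toReal_ofReal (integral_nonneg fun a => g_nonneg 1 m a)]
  -- the limit masses sum to one
  have hsum : HasSum pr 1 := by
    have hmeasm : ∀ m : ℕ, MeasurableSet {ω | Zlim ω = m} := by
      intro m
      have : {ω | Zlim ω = m} = Zlim ⁻¹' {m} := by ext ω; simp
      rw [this]
      exact hZlimmeas (measurableSet_singleton m)
    have hdisj : Pairwise (Function.onFun Disjoint fun m => {ω | Zlim ω = m}) := by
      intro i j hij
      refine Set.disjoint_left.2 fun ω hi hj => hij ?_
      rw [← hi, ← hj]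
    have huniv : (⋃ m : ℕ, {ω | Zlim ω = m}) = Set.univ := by
      ext ω
      simp only [Set.mem_iUnion, Set.mem_setOf_eq, Set.mem_univ, iff_true]
      exact ⟨Zlim ω, rfl⟩
    have h1 : ∑' m, p m = 1 := by
      rw [hp, ← measure_iUnion hdisj hmeasm, huniv, measure_univ]
    have hsummable : Summable pr := ENNReal.summable_toReal (by rw [h1]; exact ENNReal.one_ne_top)
    refine hsummable.hasSum_iff.2 ?_
    rw [hpr, ← ENNReal.tsum_toReal_eq hp_fin, h1, ENNReal.toReal_one]
  -- first selection: the candidate limit measure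
  obtain ⟨ms0, ν, hms0, hνprob, hν0', hνweak⟩ := selection νn hprobn hν00 pr hsum hconv'
  -- identification of integrals against `g 1 m` for any weak subsequential limit
  have limid : ∀ (L : Measure ℝ) (φ : ℕ → ℕ), Tendsto φ atTop atTop →
      (∀ f : BoundedContinuousFunction ℝ ℝ,
        Tendsto (fun k => ∫ a, f a ∂(νn (φ k))) atTop (𝓝 (∫ a, f a ∂L))) →
      ∀ m, ∫ a, g 1 m a ∂L = pr m := by
    intro L φ hφ hLweak m
    have h1 := hLweak (gbcf m)
    have h2 : Tendsto (fun k => ∫ a, (gbcf m) a ∂(νn (φ k))) atTop (𝓝 (pr m)) := by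
      refine ((hconv' m).comp hφ).congr fun k => ?_
      exact integral_congr_ae (Eventually.of_forall fun a => (gbcf_coe m a).symm)
    have h3 : ∫ a, (gbcf m) a ∂L = ∫ a, g 1 m a ∂L :=
      integral_congr_ae (Eventually.of_forall fun a => gbcf_coe m a)
    rw [← h3]
    exact tendsto_nhds_unique h1 h2
  have hνg : ∀ m, ∫ a, g 1 m a ∂ν = pr m := limid ν ms0 hms0.tendsto_atTop hνweak
  refine ⟨ν, hνprob, hν0', ?_, ?_⟩
  · -- weak convergence of the whole sequence
    intro f
    have hif : (fun n => ∫ ω, f (A n ω) ∂μ) = fun n => ∫ a, f a ∂(νn n) := by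
      funext n
      rw [hνn, integral_map (hAmeas n).aemeasurable f.continuous.aestronglyMeasurable]
    rw [hif]
    refine tendsto_of_subseq_tendsto fun ns hns => ?_
    obtain ⟨ms, L', hmsS, hL'prob, hL'0, hL'weak⟩ := selection (fun k => νn (ns k))
      (fun k => hprobn _) (fun k => hν00 _) pr hsum (fun m => (hconv' m).comp hns)
    have hL'g := limid L' (fun k => ns (ms k)) (hns.comp hmsS.tendsto_atTop) hL'weak
    have hLν : L' = ν := measure_eq_of_g_eq hL'0 hν0' (fun m => by rw [hL'g m, hνg m])
    exact ⟨ms, by rw [← hLν]; exact hL'weak f⟩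
  · -- the mixed-Poisson identity for the limit
    intro m
    have h2 : ∫⁻ a, ENNReal.ofReal (Real.exp (-a) * a ^ m / (Nat.factorial m)) ∂ν
        = ∫⁻ a, ENNReal.ofReal (g 1 m a) ∂ν := by
      refine lintegral_congr_ae ?_
      have hae : ∀ᵐ a ∂ν, 0 ≤ a := by
        rw [ae_iff]
        have hs : {a : ℝ | ¬ 0 ≤ a} = Set.Iio 0 := by ext a; simp [not_le]
        rw [hs]
        exact hν0'
      filter_upwards [hae] with a ha
      rw [g, max_eq_left ha, one_mul]
    rw [h2, ← ofReal_integral_eq_lintegral_ofReal (g_integrable one_pos m)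
      (Eventually.of_forall fun a => g_nonneg 1 m a), hνg m, hpr,
      ENNReal.ofReal_toReal (hp_fin m)]
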